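/- For a, c > 0 and b ∈ ℝ, ∫₀^∞ (1/√(2πcλ)) · exp(−(b + a·λ)²/(2cλ)) dλ = (1/a)·exp(−2·max(a·b/c, 0)). -/

import Mathlib

open MeasureTheory Real Set Filter Topology

noncomputable def svmG (x : ℝ) : ℝ := ∫ t in Iic x, Real.exp (-t ^ 2 / 2)

lemma svm_gauss_cont : Continuous fun t : ℝ => Real.exp (-t ^ 2 / 2) := by
  continuity

lemma svm_gauss_int : Integrable fun t : ℝ => Real.exp (-t ^ 2 / 2) := by
  have := integrable_exp_neg_mul_sq (b := (1/2 : ℝ)) (by norm_num)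
  have he : ∀ t : ℝ, -(1/2 : ℝ) * t ^ 2 = -t ^ 2 / 2 := fun t => by ring
  simpa only [he] using this

lemma svmG_eq (x : ℝ) : svmG x = svmG 0 + ∫ t in (0:ℝ)..x, Real.exp (-t ^ 2 / 2) := by
  rw [← intervalIntegral.integral_Iic_sub_Iic svm_gauss_int.integrableOn
    svm_gauss_int.integrableOn]
  unfold svmG; ring

lemma svmG_hasDeriv (x : ℝ) : HasDerivAt svmG (Real.exp (-x ^ 2 / 2)) x := by
  have h := (svm_gauss_cont.integral_hasStrictDerivAt 0 x).hasDerivAt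
  have : svmG = fun u => svmG 0 + ∫ t in (0:ℝ)..u, Real.exp (-t ^ 2 / 2) := by
    funext u; exact svmG_eq u
  rw [this]
  simpa using (h.const_add (svmG 0))

lemma svmG_Ioi : ∫ t in Ioi (0:ℝ), Real.exp (-t ^ 2 / 2) = Real.sqrt (2 * π) / 2 := by
  have := integral_gaussian_Ioi (1/2 : ℝ)
  have h2 : π / (1/2 : ℝ) = 2 * π := by ring
  rw [h2] at this
  have he : ∀ t : ℝ, -(1/2 : ℝ) * t ^ 2 = -t ^ 2 / 2 := fun t => by ring
  simpa only [he] using this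

lemma svmG_zero : svmG 0 = Real.sqrt (2 * π) / 2 := by
  have h := integral_comp_neg_Ioi (c := (0:ℝ)) (f := fun t => Real.exp (-t ^ 2 / 2))
  simp only [neg_neg, neg_zero, neg_sq] at h
  unfold svmG
  rw [← h, svmG_Ioi]

lemma svmG_atTop : Tendsto svmG atTop (𝓝 (Real.sqrt (2 * π))) := by
  have h := intervalIntegral_tendsto_integral_Ioi 0 svm_gauss_int.integrableOn tendsto_id
  have : Tendsto (fun x => svmG 0 + ∫ t in (0:ℝ)..x, Real.exp (-t ^ 2 / 2)) atTop
      (𝓝 (svmG 0 + Real.sqrt (2*π)/2)) := tendsto_const_nhds.add (svmG_Ioi ▸ h)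
  rw [← svmG_zero] at this
  have h2 : svmG 0 + svmG 0 = Real.sqrt (2*π) := by rw [svmG_zero]; ring
  rw [h2] at this
  exact this.congr (fun x => (svmG_eq x).symm)

lemma svmG_atBot : Tendsto svmG atBot (𝓝 0) := by
  have h := intervalIntegral_tendsto_integral_Iic 0 svm_gauss_int.integrableOn tendsto_id
  -- ∫ x..0 → ∫ Iic 0 = svmG 0 ; and ∫ x..0 = svmG 0 - svmG x
  have heq : ∀ x : ℝ, (∫ t in x..(0:ℝ), Real.exp (-t ^ 2 / 2)) = svmG 0 - svmG x := by
    intro x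
    rw [← intervalIntegral.integral_Iic_sub_Iic svm_gauss_int.integrableOn
      svm_gauss_int.integrableOn]
    rfl
  have h' : Tendsto (fun x => svmG 0 - svmG x) atBot (𝓝 (svmG 0)) :=
    h.congr heq
  have := (tendsto_const_nhds (x := svmG 0) (f := atBot)).sub h'
  simpa using this


lemma svm_ftc_Ioi_zero {F f : ℝ → ℝ} {L M : ℝ}
    (hd : ∀ x ∈ Ioi (0:ℝ), HasDerivAt F (f x) x)
    (hpos : ∀ x ∈ Ioi (0:ℝ), 0 ≤ f x)
    (htop : Tendsto F atTop (𝓝 L))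
    (h0 : Tendsto F (𝓝[>] (0:ℝ)) (𝓝 M)) :
    ∫ x in Ioi (0:ℝ), f x = L - M := by
  have hcont : ContinuousOn F (Ioi 0) := fun x hx =>
    (hd x hx).continuousAt.continuousWithinAt
  have hmono : MonotoneOn F (Ioi (0:ℝ)) := by
    apply monotoneOn_of_deriv_nonneg (convex_Ioi 0) hcont
    · intro x hx
      rw [interior_Ioi] at hx
      exact (hd x hx).differentiableAt.differentiableWithinAt
    · intro x hx
      rw [interior_Ioi] at hx
      rw [(hd x hx).deriv]
      exact hpos x hx
  -- M ≤ F ε for ε > 0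
  have hMle : ∀ ε : ℝ, 0 < ε → M ≤ F ε := by
    intro ε hε
    refine le_of_tendsto h0 ?_
    filter_upwards [Ioc_mem_nhdsGT_of_mem (Set.left_mem_Ico.2 hε)] with δ hδ
    exact hmono hδ.1 hε hδ.2
  -- integral over Ioi ε
  have key : ∀ ε : ℝ, 0 < ε → ∫ x in Ioi ε, f x = L - F ε := by
    intro ε hε
    exact integral_Ioi_of_hasDerivAt_of_nonneg'
      (fun x hx => hd x (lt_of_lt_of_le hε hx))
      (fun x hx => hpos x (hε.trans hx)) htop
  -- integrability on Ioi 0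
  have hsub : ∀ ε : ℝ, 0 < ε → Icc ε 1 ⊆ Ioi (0:ℝ) := fun ε hε x hx => hε.trans_le hx.1
  have hfiIoc : ∀ ε : ℝ, 0 < ε → IntegrableOn f (Ioc ε 1) := by
    intro ε hε
    exact intervalIntegral.integrableOn_deriv_of_nonneg (hcont.mono (hsub ε hε))
      (fun x hx => hd x (lt_of_lt_of_le hε hx.1.le))
      (fun x hx => hpos x (hε.trans hx.1))
  have hbound : ∀ ε : ℝ, 0 < ε → ε ≤ 1 → (∫ x in Ioc ε 1, ‖f x‖) ≤ F 1 - M := by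
    intro ε hε hε1
    have heq : (∫ x in Ioc ε 1, ‖f x‖) = ∫ x in Ioc ε 1, f x := by
      refine setIntegral_congr_fun measurableSet_Ioc fun x hx => ?_
      exact Real.norm_of_nonneg (hpos x (hε.trans hx.1))
    rw [heq]
    have h2 : ∫ x in Ioc ε 1, f x = F 1 - F ε := by
      rw [← intervalIntegral.integral_of_le hε1]
      exact intervalIntegral.integral_eq_sub_of_hasDerivAt_of_le hε1
        (hcont.mono (hsub ε hε))
        (fun x hx => hd x (lt_of_lt_of_le hε hx.1.le))
        ((intervalIntegrable_iff_integrableOn_Ioc_of_le hε1).2 (hfiIoc ε hε))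
    rw [h2]
    exact sub_le_sub_left (hMle ε hε) _
  have hseq : ∀ n : ℕ, (0:ℝ) < 1 / (n + 1) := fun n => by positivity
  have hseq1 : ∀ n : ℕ, (1:ℝ) / (n + 1) ≤ 1 := fun n => by
    rw [div_le_one (by positivity)]
    simp
  have htend0 : Tendsto (fun n : ℕ => (1:ℝ) / (n + 1)) atTop (𝓝[>] 0) := by
    refine tendsto_nhdsWithin_of_tendsto_nhds_of_eventually_within _
      tendsto_one_div_add_atTop_nhds_zero_nat ?_
    exact Eventually.of_forall fun n => hseq n
  have hintIoc : IntegrableOn f (Ioc (0:ℝ) 1) := by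
    apply integrableOn_Ioc_of_intervalIntegral_norm_bounded_left
      (fun n : ℕ => hfiIoc _ (hseq n)) tendsto_one_div_add_atTop_nhds_zero_nat
    exact Eventually.of_forall fun n => hbound _ (hseq n) (hseq1 n)
  have hintIoi1 : IntegrableOn f (Ioi (1:ℝ)) :=
    integrableOn_Ioi_deriv_of_nonneg'
      (fun x hx => hd x (mem_Ioi.2 (lt_of_lt_of_le one_pos hx)))
      (fun x hx => hpos x (mem_Ioi.2 (one_pos.trans hx))) htop
  have hint : IntegrableOn f (Ioi (0:ℝ)) := by
    have hu : Ioc (0:ℝ) 1 ∪ Ioi 1 = Ioi 0 := Ioc_union_Ioi_eq_Ioi zero_le_one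
    rw [← hu]
    exact hintIoc.union hintIoi1
  -- monotone family of sets
  set φ : ℕ → Set ℝ := fun n => Ioi ((1:ℝ) / (n + 1)) with hφ
  have hφmono : Monotone φ := by
    intro n m hnm
    apply Ioi_subset_Ioi
    have hc : (n:ℝ) + 1 ≤ (m:ℝ) + 1 := by
      have : (n:ℝ) ≤ m := Nat.cast_le.2 hnm
      linarith
    exact one_div_le_one_div_of_le (by positivity) hc
  have hφunion : (⋃ n, φ n) = Ioi (0:ℝ) := by
    ext x
    simp only [hφ, mem_iUnion, mem_Ioi]
    constructor
    · rintro ⟨n, hn⟩; exact (hseq n).trans hn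
    · intro hx
      obtain ⟨n, hn⟩ := exists_nat_one_div_lt hx
      exact ⟨n, hn⟩
  have htendInt : Tendsto (fun n : ℕ => ∫ x in φ n, f x) atTop
      (𝓝 (∫ x in Ioi (0:ℝ), f x)) := by
    have := tendsto_setIntegral_of_monotone (fun n => measurableSet_Ioi) hφmono
      (hφunion ▸ hint)
    rwa [hφunion] at this
  have htendF : Tendsto (fun n : ℕ => L - F ((1:ℝ) / (n + 1))) atTop (𝓝 (L - M)) :=
    tendsto_const_nhds.sub (h0.comp htend0)
  have heq : (fun n : ℕ => ∫ x in φ n, f x) = fun n : ℕ => L - F ((1:ℝ) / (n + 1)) := by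
    funext n
    exact key _ (hseq n)
  rw [heq] at htendInt
  exact tendsto_nhds_unique htendInt htendF



section helpers
variable {a c b : ℝ}

-- derivative of l ↦ sqrt (c*l)
lemma svm_sqrt_deriv (hc : 0 < c) {l : ℝ} (hl : 0 < l) :
    HasDerivAt (fun l : ℝ => Real.sqrt (c * l)) (c / (2 * Real.sqrt (c * l))) l := by
  have h1 : HasDerivAt (fun l : ℝ => c * l) c l := by
    simpa using (hasDerivAt_id l).const_mul c
  have h2 := (Real.hasDerivAt_sqrt (ne_of_gt (mul_pos hc hl))).comp l h1
  refine HasDerivAt.congr_deriv h2 ?_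
  ring

lemma svm_gp_deriv (hc : 0 < c) {l : ℝ} (hl : 0 < l) (b : ℝ) :
    HasDerivAt (fun l : ℝ => (a * l + b) / Real.sqrt (c * l))
      ((a * l - b) / (2 * l * Real.sqrt (c * l))) l := by
  have hs0 : Real.sqrt (c * l) ≠ 0 := by positivity
  have hsq : Real.sqrt (c * l) ^ 2 = c * l := Real.sq_sqrt (mul_pos hc hl).le
  have hnum : HasDerivAt (fun l : ℝ => a * l + b) a l := by
    simpa using ((hasDerivAt_id l).const_mul a).add_const b
  have h := hnum.div (svm_sqrt_deriv hc hl) hs0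
  refine HasDerivAt.congr_deriv h ?_
  have hS : 0 < Real.sqrt (c * l) := Real.sqrt_pos.2 (mul_pos hc hl)
  set S := Real.sqrt (c * l) with hSdef
  field_simp
  linear_combination (a*l+b) * hsq
end helpers

noncomputable def svmF (a c b : ℝ) (l : ℝ) : ℝ :=
  (1 / (a * Real.sqrt (2 * π))) * (svmG ((a * l + b) / Real.sqrt (c * l))
    + Real.exp (-2 * a * b / c) * svmG ((a * l + -b) / Real.sqrt (c * l)))

lemma svmF_hasDeriv {a c b : ℝ} (ha : 0 < a) (hc : 0 < c) {l : ℝ} (hl : 0 < l) :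
    HasDerivAt (svmF a c b)
      ((1 / Real.sqrt (2 * π * c * l)) * Real.exp (-(b + a * l) ^ 2 / (2 * c * l))) l := by
  have hgp := svm_gp_deriv (a := a) hc hl b
  have hgm := svm_gp_deriv (a := a) hc hl (-b)
  have hGp := (svmG_hasDeriv _).comp l hgp
  have hGm := (svmG_hasDeriv _).comp l hgm
  have hcomb := (hGp.add (hGm.const_mul (Real.exp (-2 * a * b / c)))).const_mul
    (1 / (a * Real.sqrt (2 * π)))
  refine HasDerivAt.congr_deriv hcomb ?_
  have hS : 0 < Real.sqrt (c * l) := Real.sqrt_pos.2 (mul_pos hc hl)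
  have hsq : Real.sqrt (c * l) ^ 2 = c * l := Real.sq_sqrt (mul_pos hc hl).le
  set S := Real.sqrt (c * l) with hSdef
  have h2π : (0:ℝ) < Real.sqrt (2 * π) := Real.sqrt_pos.2 (by positivity)
  have hx1 : -((a * l + b) / S) ^ 2 / 2 = -(b + a * l) ^ 2 / (2 * c * l) := by
    rw [div_pow, hsq]; ring
  have hx2 : Real.exp (-2 * a * b / c) * Real.exp (-((a * l + -b) / S) ^ 2 / 2)
      = Real.exp (-(b + a * l) ^ 2 / (2 * c * l)) := by
    rw [← Real.exp_add]; congr 1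
    rw [div_pow, hsq]
    field_simp
    ring
  have hsqrt : Real.sqrt (2 * π * c * l) = Real.sqrt (2 * π) * S := by
    rw [show 2 * π * c * l = (2 * π) * (c * l) by ring, Real.sqrt_mul (by positivity)]
  rw [hx1, ← mul_assoc (Real.exp (-2 * a * b / c)), hx2, hsqrt]
  field_simp
  ring

lemma svm_sqrt_atTop : Tendsto Real.sqrt atTop atTop := by
  rw [show (Real.sqrt : ℝ → ℝ) = fun x => x ^ (1/(2:ℝ)) from funext Real.sqrt_eq_rpow]
  exact tendsto_rpow_atTop (by norm_num)

lemma svm_g_atTop {a c : ℝ} (ha : 0 < a) (hc : 0 < c) (d : ℝ) :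
    Tendsto (fun l : ℝ => (a * l + d) / Real.sqrt (c * l)) atTop atTop := by
  have hc' : (0:ℝ) < Real.sqrt c := Real.sqrt_pos.2 hc
  have h1 : Tendsto (fun l : ℝ => (a / Real.sqrt c) * Real.sqrt l) atTop atTop :=
    Tendsto.const_mul_atTop (by positivity) svm_sqrt_atTop
  have hcl : Tendsto (fun l : ℝ => Real.sqrt (c * l)) atTop atTop :=
    svm_sqrt_atTop.comp (Tendsto.const_mul_atTop hc tendsto_id)
  have h2 : Tendsto (fun l : ℝ => d / Real.sqrt (c * l)) atTop (𝓝 0) :=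
    tendsto_const_nhds.div_atTop hcl
  have h3 : Tendsto (fun l : ℝ => (a / Real.sqrt c) * Real.sqrt l + d / Real.sqrt (c * l))
      atTop atTop := by
    refine tendsto_atTop_add_right_of_le' _ (-1) h1 ?_
    exact h2.eventually (eventually_ge_nhds (by norm_num))
  refine h3.congr' ?_
  filter_upwards [Ioi_mem_atTop (0:ℝ)] with l hl
  have hl' : (0:ℝ) < l := hl
  have hs : Real.sqrt (c * l) = Real.sqrt c * Real.sqrt l := Real.sqrt_mul hc.le l
  have hsl : 0 < Real.sqrt l := Real.sqrt_pos.2 hl'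
  rw [hs]
  have key : a / Real.sqrt c * Real.sqrt l = a * l / (Real.sqrt c * Real.sqrt l) := by
    rw [div_mul_eq_mul_div, div_eq_div_iff (by positivity) (by positivity)]
    linear_combination (a * Real.sqrt c) * Real.mul_self_sqrt hl'.le
  rw [key, ← add_div]

lemma svm_sqrt_nhdsGT {c : ℝ} (hc : 0 < c) :
    Tendsto (fun l : ℝ => Real.sqrt (c * l)) (𝓝[>] 0) (𝓝[>] 0) := by
  refine tendsto_nhdsWithin_of_tendsto_nhds_of_eventually_within _ ?_ ?_
  · have : Continuous fun l : ℝ => Real.sqrt (c * l) := by continuity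
    have h := (this.tendsto 0).mono_left (nhdsWithin_le_nhds : 𝓝[>] (0:ℝ) ≤ 𝓝 0)
    simpa using h
  · filter_upwards [self_mem_nhdsWithin] with l hl
    exact Real.sqrt_pos.2 (mul_pos hc hl)

lemma svm_g_zero_pos {a c d : ℝ} (hc : 0 < c) (hd : 0 < d) :
    Tendsto (fun l : ℝ => (a * l + d) / Real.sqrt (c * l)) (𝓝[>] 0) atTop := by
  have hnum : Tendsto (fun l : ℝ => a * l + d) (𝓝[>] 0) (𝓝 d) := by
    have : Continuous fun l : ℝ => a * l + d := by continuity
    have h := (this.tendsto 0).mono_left (nhdsWithin_le_nhds : 𝓝[>] (0:ℝ) ≤ 𝓝 0)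
    simpa using h
  have hinv : Tendsto (fun l : ℝ => (Real.sqrt (c * l))⁻¹) (𝓝[>] 0) atTop :=
    tendsto_inv_nhdsGT_zero.comp (svm_sqrt_nhdsGT hc)
  have := hnum.pos_mul_atTop hd hinv
  simpa [div_eq_mul_inv] using this

lemma svm_g_zero_neg {a c d : ℝ} (hc : 0 < c) (hd : d < 0) :
    Tendsto (fun l : ℝ => (a * l + d) / Real.sqrt (c * l)) (𝓝[>] 0) atBot := by
  have hnum : Tendsto (fun l : ℝ => a * l + d) (𝓝[>] 0) (𝓝 d) := by
    have : Continuous fun l : ℝ => a * l + d := by continuity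
    have h := (this.tendsto 0).mono_left (nhdsWithin_le_nhds : 𝓝[>] (0:ℝ) ≤ 𝓝 0)
    simpa using h
  have hinv : Tendsto (fun l : ℝ => (Real.sqrt (c * l))⁻¹) (𝓝[>] 0) atTop :=
    tendsto_inv_nhdsGT_zero.comp (svm_sqrt_nhdsGT hc)
  have := hnum.neg_mul_atTop hd hinv
  simpa [div_eq_mul_inv] using this

lemma svm_g_zero_zero {a c : ℝ} (hc : 0 < c) :
    Tendsto (fun l : ℝ => (a * l + 0) / Real.sqrt (c * l)) (𝓝[>] 0) (𝓝 0) := by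
  have hcont : Continuous fun l : ℝ => (a / Real.sqrt c) * Real.sqrt l := by continuity
  have h1 : Tendsto (fun l : ℝ => (a / Real.sqrt c) * Real.sqrt l) (𝓝[>] 0) (𝓝 0) := by
    have h := (hcont.tendsto 0).mono_left (nhdsWithin_le_nhds : 𝓝[>] (0:ℝ) ≤ 𝓝 0)
    simpa using h
  refine h1.congr' ?_
  filter_upwards [self_mem_nhdsWithin] with l hl
  have hl' : (0:ℝ) < l := hl
  have hs : Real.sqrt (c * l) = Real.sqrt c * Real.sqrt l := Real.sqrt_mul hc.le l
  have hsl : 0 < Real.sqrt l := Real.sqrt_pos.2 hl'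
  have hsc : 0 < Real.sqrt c := Real.sqrt_pos.2 hc
  rw [add_zero, hs,
    show a * l / (Real.sqrt c * Real.sqrt l) = (a / Real.sqrt c) * (l / Real.sqrt l) by ring,
    Real.div_sqrt]

theorem svm_pseudo_likelihood (a c b : ℝ) (ha : 0 < a) (hc : 0 < c) :
    ∫ l in Ioi (0 : ℝ),
        (1 / Real.sqrt (2 * π * c * l)) * Real.exp (-(b + a * l) ^ 2 / (2 * c * l))
      = (1 / a) * Real.exp (-2 * max (a * b / c) 0) := by
  have hπ : (0:ℝ) < Real.sqrt (2 * π) := Real.sqrt_pos.2 (by positivity)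
  set E := Real.exp (-2 * a * b / c) with hEdef
  set K := 1 / (a * Real.sqrt (2 * π)) with hKdef
  have hd : ∀ x ∈ Ioi (0:ℝ), HasDerivAt (svmF a c b)
      ((1 / Real.sqrt (2 * π * c * x)) * Real.exp (-(b + a * x) ^ 2 / (2 * c * x))) x :=
    fun x hx => svmF_hasDeriv ha hc hx
  have hpos : ∀ x ∈ Ioi (0:ℝ),
      0 ≤ (1 / Real.sqrt (2 * π * c * x)) * Real.exp (-(b + a * x) ^ 2 / (2 * c * x)) :=
    fun x _ => by positivity
  have hGcont : Continuous svmG :=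
    continuous_iff_continuousAt.2 fun x => (svmG_hasDeriv x).continuousAt
  have htopP : Tendsto (fun l : ℝ => svmG ((a * l + b) / Real.sqrt (c * l))) atTop
      (𝓝 (Real.sqrt (2 * π))) := svmG_atTop.comp (svm_g_atTop ha hc b)
  have htopM : Tendsto (fun l : ℝ => svmG ((a * l + -b) / Real.sqrt (c * l))) atTop
      (𝓝 (Real.sqrt (2 * π))) := svmG_atTop.comp (svm_g_atTop ha hc (-b))
  have htop : Tendsto (svmF a c b) atTop
      (𝓝 (K * (Real.sqrt (2 * π) + E * Real.sqrt (2 * π)))) := by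
    exact ((htopP.add (htopM.const_mul E)).const_mul K)
  rcases lt_trichotomy b 0 with hb | hb | hb
  · -- b < 0
    have h0P : Tendsto (fun l : ℝ => svmG ((a * l + b) / Real.sqrt (c * l))) (𝓝[>] 0)
        (𝓝 0) := svmG_atBot.comp (svm_g_zero_neg hc hb)
    have h0M : Tendsto (fun l : ℝ => svmG ((a * l + -b) / Real.sqrt (c * l))) (𝓝[>] 0)
        (𝓝 (Real.sqrt (2 * π))) := svmG_atTop.comp (svm_g_zero_pos hc (by linarith))
    have h0 : Tendsto (svmF a c b) (𝓝[>] 0) (𝓝 (K * (0 + E * Real.sqrt (2 * π)))) := by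
      exact ((h0P.add (h0M.const_mul E)).const_mul K)
    rw [svm_ftc_Ioi_zero hd hpos htop h0]
    have hmax : max (a * b / c) 0 = 0 :=
      max_eq_right (div_nonpos_of_nonpos_of_nonneg (by nlinarith) hc.le)
    rw [hmax, mul_zero, Real.exp_zero, hKdef]
    field_simp
    ring
  · -- b = 0
    subst hb
    have hg := svm_g_zero_zero (a := a) hc
    have h0P : Tendsto (fun l : ℝ => svmG ((a * l + 0) / Real.sqrt (c * l))) (𝓝[>] 0)
        (𝓝 (svmG 0)) := (hGcont.tendsto 0).comp hg
    have h0 : Tendsto (svmF a c 0) (𝓝[>] 0) (𝓝 (K * (svmG 0 + E * svmG 0))) := by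
      refine Tendsto.congr (fun l => ?_) ((h0P.add (h0P.const_mul E)).const_mul K)
      simp only [svmF, neg_zero, ← hKdef, ← hEdef]
    rw [svm_ftc_Ioi_zero hd hpos htop h0]
    have hE1 : E = 1 := by rw [hEdef]; norm_num
    rw [hE1, svmG_zero]
    have hmax : max (a * 0 / c) 0 = 0 := by norm_num
    rw [hmax, mul_zero, Real.exp_zero, hKdef]
    field_simp
    ring
  · -- b > 0
    have h0P : Tendsto (fun l : ℝ => svmG ((a * l + b) / Real.sqrt (c * l))) (𝓝[>] 0)
        (𝓝 (Real.sqrt (2 * π))) := svmG_atTop.comp (svm_g_zero_pos hc hb)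
    have h0M : Tendsto (fun l : ℝ => svmG ((a * l + -b) / Real.sqrt (c * l))) (𝓝[>] 0)
        (𝓝 0) := svmG_atBot.comp (svm_g_zero_neg hc (by linarith))
    have h0 : Tendsto (svmF a c b) (𝓝[>] 0) (𝓝 (K * (Real.sqrt (2 * π) + E * 0))) := by
      exact ((h0P.add (h0M.const_mul E)).const_mul K)
    rw [svm_ftc_Ioi_zero hd hpos htop h0]
    have hmax : max (a * b / c) 0 = a * b / c :=
      max_eq_left (by positivity)
    rw [hmax, hEdef, hKdef]
    rw [show -2 * (a * b / c) = -2 * a * b / c by ring]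
    field_simp
    ring
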